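/- Let G be an abelian p-group and x ∈ G with ⟨x⟩ ∩ G¹ = 0, where G¹ = ⋂ₙ pⁿG. Then every homomorphism f: ⟨x⟩ → G extends to an endomorphism of G if and only if for every y ∈ G with exp(y) ≤ exp(x), one has h(pᵏx) ≤ h(pᵏy) for all k ≥ 0 (i.e., the Ulm sequence of x is ≤ that of y). -/

import Mathlib

open AddSubgroup

/-- The `p`-height of an element, as an extended natural number. -/
noncomputable def pHeight (p : ℕ) {G : Type*} [AddCommGroup G] (x : G) : ℕ∞ :=
  sSup {n : ℕ∞ | ∃ m : ℕ, n = (m : ℕ∞) ∧ ∃ y : G, p ^ m • y = x}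

/-- `G` is an abelian `p`-group. -/
def IsPGrp (p : ℕ) (G : Type*) [AddCommGroup G] : Prop :=
  ∀ x : G, ∃ n : ℕ, p ^ n • x = 0

/-- `H ∈ Q(G)`: every homomorphism `H → G` extends to an endomorphism of `G`. -/
def InQ {G : Type*} [AddCommGroup G] (H : AddSubgroup G) : Prop :=
  ∀ f : H →+ G, ∃ g : G →+ G, ∀ x : H, g x = f x

/-- `H ∈ P(G)`: every monomorphism `H → G` extends to an endomorphism of `G`. -/
def InP {G : Type*} [AddCommGroup G] (H : AddSubgroup G) : Prop :=
  ∀ f : H →+ G, Function.Injective f → ∃ g : G →+ G, ∀ x : H, g x = f x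

/-- `H ∈ W(G)`: every endomorphism of `H` extends to an endomorphism of `G`. -/
def InW {G : Type*} [AddCommGroup G] (H : AddSubgroup G) : Prop :=
  ∀ f : H →+ H, ∃ g : G →+ G, ∀ x : H, g x = (f x : G)

/-- `K` is an internal direct sum of cyclic subgroups. -/
def IsDirectSumOfCyclics {G : Type*} [AddCommGroup G] (K : AddSubgroup G) : Prop :=
  ∃ (ι : Type) (a : ι → G), (∀ i, a i ∈ K) ∧ (⨆ i, zmultiples (a i)) = K ∧
    iSupIndep (fun i => zmultiples (a i))

/-- `K` is a `p`-pure subgroup: `pⁿG ∩ K = pⁿK`. -/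
def IsPure (p : ℕ) {G : Type*} [AddCommGroup G] (K : AddSubgroup G) : Prop :=
  ∀ n : ℕ, ∀ x ∈ K, (∃ y : G, p ^ n • y = x) → ∃ z ∈ K, p ^ n • z = x

/-- The quotient `G/K` is divisible (equivalently `G = K + pG`). -/
def QuotDivisible (p : ℕ) {G : Type*} [AddCommGroup G] (K : AddSubgroup G) : Prop :=
  ∀ x : G, ∃ y : G, x - p • y ∈ K

/-- The Ulm sequence of `x` has a gap before index `k` (with `h₋₁ = -1`). -/
def HasGapBefore (p : ℕ) {G : Type*} [AddCommGroup G] (x : G) (k : ℕ) : Prop :=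
  if k = 0 then 0 < pHeight p x
  else pHeight p (p ^ (k - 1) • x) + 1 < pHeight p (p ^ k • x)


section Infra
variable {G : Type*} [AddCommGroup G] (p : ℕ)

/-- `z` is divisible by `p^M` in `G`. -/
def Dv (M : ℕ) (z : G) : Prop := ∃ g : G, p ^ M • g = z

variable {p}

lemma dv_zero (M : ℕ) : Dv p M (0:G) := ⟨0, smul_zero _⟩

lemma dv_zero' (z : G) : Dv p 0 z := ⟨z, by simp⟩

lemma pow_smul_sub {M j : ℕ} (h : M ≤ j) (z : G) : p ^ M • (p ^ (j - M) • z) = p ^ j • z := by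
  rw [smul_smul, ← pow_add]; congr 2; omega

lemma dv_pow_smul {M j : ℕ} (h : M ≤ j) (z : G) : Dv p M (p ^ j • z) :=
  ⟨p ^ (j - M) • z, pow_smul_sub h z⟩

lemma Dv.mono {M M' : ℕ} {z : G} (h : M' ≤ M) : Dv p M z → Dv p M' z := by
  rintro ⟨g, rfl⟩; exact dv_pow_smul h g

lemma Dv.add {M : ℕ} {z z' : G} : Dv p M z → Dv p M z' → Dv p M (z + z') := by
  rintro ⟨g, rfl⟩ ⟨g', rfl⟩; exact ⟨g + g', by rw [smul_add]⟩

lemma Dv.neg {M : ℕ} {z : G} : Dv p M z → Dv p M (-z) := by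
  rintro ⟨g, rfl⟩; exact ⟨-g, by rw [smul_neg]⟩

lemma Dv.sub {M : ℕ} {z z' : G} (h : Dv p M z) (h' : Dv p M z') : Dv p M (z - z') := by
  rw [sub_eq_add_neg]; exact h.add h'.neg

lemma Dv.pow_nsmul {M m : ℕ} {z : G} : Dv p M z → Dv p (m + M) (p ^ m • z) := by
  rintro ⟨g, rfl⟩; exact ⟨g, by rw [smul_smul, ← pow_add]⟩

lemma nsmul_zsmul (m : ℕ) (c : ℤ) (z : G) : p ^ m • (c • z) = ((p:ℤ) ^ m * c) • z := by
  rw [← natCast_zsmul (c • z) (p ^ m), smul_smul]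
  norm_cast

lemma Dv.zsmul {M : ℕ} {z : G} (c : ℤ) : Dv p M z → Dv p M (c • z) := by
  rintro ⟨g, rfl⟩; exact ⟨c • g, smul_comm _ _ _⟩

lemma dv_zsmul_of_dvd {M : ℕ} {c : ℤ} (h : ((p:ℤ)) ^ M ∣ c) (z : G) : Dv p M (c • z) := by
  obtain ⟨d, rfl⟩ := h
  exact ⟨d • z, by rw [nsmul_zsmul]⟩

lemma Dv.sum {M : ℕ} {ι : Type*} (s : Finset ι) (f : ι → G) (h : ∀ i ∈ s, Dv p M (f i)) :
    Dv p M (∑ i ∈ s, f i) := by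
  classical
  induction s using Finset.induction with
  | empty => simpa using dv_zero M
  | insert _ _ hx ih =>
    rw [Finset.sum_insert hx]
    exact (h _ (Finset.mem_insert_self _ _)).add (ih fun i hi => h i (Finset.mem_insert_of_mem hi))

lemma dv_of_unit_zsmul (hp : p.Prime) (hG : IsPGrp p G) {u : ℤ} (hu : ¬ ((p:ℤ) ∣ u))
    {M : ℕ} {z : G} (h : Dv p M (u • z)) : Dv p M z := by
  obtain ⟨n0, hn0⟩ := hG z
  have hcop : IsCoprime ((p:ℤ) ^ n0) u := by
    rw [Int.isCoprime_iff_gcd_eq_one]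
    have h1 : Nat.Coprime p u.natAbs := by
      rw [Nat.Prime.coprime_iff_not_dvd hp]
      intro hd
      exact hu (Int.natCast_dvd.mpr hd)
    have h2 : Nat.Coprime (p ^ n0) u.natAbs := Nat.Coprime.pow_left _ h1
    simpa [Int.gcd, Int.natAbs_pow] using h2
  obtain ⟨α, β, hαβ⟩ := hcop
  obtain ⟨g, hg⟩ := h
  refine ⟨β • g, ?_⟩
  have hz : z = (α * (p:ℤ)^n0) • z + (β * u) • z := by
    rw [← add_smul, hαβ, one_smul]
  have h1 : ((p:ℤ)^n0) • z = 0 := by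
    have : (((p ^ n0 : ℕ)) : ℤ) • z = 0 := by rw [natCast_zsmul z]; exact hn0
    convert this using 2
    push_cast; ring
  rw [hz, mul_smul, h1, smul_zero, zero_add, mul_smul, ← hg, smul_comm]

lemma le_pHeight_of_dv {M : ℕ} {z : G} (h : Dv p M z) : (M : ℕ∞) ≤ pHeight p z := by
  obtain ⟨g, hg⟩ := h
  exact le_sSup ⟨M, rfl, g, hg⟩

lemma dv_of_le_pHeight {M : ℕ} {z : G} (h : (M : ℕ∞) ≤ pHeight p z) : Dv p M z := by
  by_contra hM
  have hMpos : M ≠ 0 := fun h0 => hM (h0 ▸ dv_zero' z)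
  have hub : ∀ n ∈ {n : ℕ∞ | ∃ m : ℕ, n = (m : ℕ∞) ∧ ∃ y : G, p ^ m • y = z}, n ≤ ((M - 1 : ℕ) : ℕ∞) := by
    rintro n ⟨m, rfl, y, hy⟩
    have : m ≤ M - 1 := by
      by_contra hm
      exact hM (Dv.mono (by omega) (⟨y, hy⟩ : Dv p m z))
    exact_mod_cast this
  have h1 : pHeight p z ≤ ((M - 1 : ℕ) : ℕ∞) := sSup_le hub
  have h2 : ((M - 1 : ℕ) : ℕ∞) < (M : ℕ∞) := by
    exact_mod_cast (by omega : M - 1 < M)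
  exact absurd (h.trans h1) (not_le.mpr h2)

lemma pHeight_le_map {G' : Type*} [AddCommGroup G'] (φ : G →+ G') (z : G) :
    pHeight p z ≤ pHeight p (φ z) := by
  refine sSup_le ?_
  rintro n ⟨m, rfl, y, hy⟩
  exact le_sSup ⟨m, rfl, φ y, by rw [← map_nsmul, hy]⟩

lemma int_val_decomp (hp : p.Prime) {c : ℤ} (hc : c ≠ 0) :
    ∃ (γ : ℕ) (u : ℤ), c = (p:ℤ) ^ γ * u ∧ ¬ ((p:ℤ) ∣ u) := by
  set n := c.natAbs with hn
  have hn0 : n ≠ 0 := Int.natAbs_ne_zero.mpr hc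
  set γ := n.factorization p with hγ
  set m := n / p ^ γ with hm
  have h1 : (p:ℕ) ^ γ * m = n := Nat.ordProj_mul_ordCompl_eq_self n p
  have hmnd : ¬ (p ∣ m) := Nat.not_dvd_ordCompl hp hn0
  rcases Int.natAbs_eq c with h2 | h2
  · refine ⟨γ, (m : ℤ), ?_, ?_⟩
    · rw [h2, ← hn, ← h1]; push_cast; ring
    · intro hd; rw [Int.natCast_dvd_natCast] at hd; exact hmnd hd
  · refine ⟨γ, -(m : ℤ), ?_, ?_⟩
    · rw [h2, ← hn, ← h1]; push_cast; ring
    · intro hd; rw [dvd_neg, Int.natCast_dvd_natCast] at hd; exact hmnd hd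

end Infra


section Cyclic
variable {A : Type*} [AddCommGroup A] {B : Type*} [AddCommGroup B]

/-- A homomorphism out of a cyclic group `zmultiples a`, sending `a` to `b`. -/
lemma exists_hom_zmultiples (a : A) (b : B) (hab : ∀ z : ℤ, z • a = 0 → z • b = 0) :
    ∃ f : AddSubgroup.zmultiples a →+ B,
      ∀ (z : ℤ) (w : AddSubgroup.zmultiples a), (w : A) = z • a → f w = z • b := by
  classical
  have key : ∀ w : AddSubgroup.zmultiples a, ∃ z : ℤ, z • a = (w : A) := fun w =>
    AddSubgroup.mem_zmultiples_iff.mp w.2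
  have wd : ∀ (z z' : ℤ), z • a = z' • a → z • b = z' • b := by
    intro z z' h
    have : (z - z') • a = 0 := by rw [sub_smul, h, sub_self]
    have h2 := hab _ this
    rw [sub_smul, sub_eq_zero] at h2
    exact h2
  refine ⟨AddMonoidHom.mk' (fun w => (key w).choose • b) ?_, ?_⟩
  · intro w w'
    have h1 : ((key (w + w')).choose) • a = ((key w).choose + (key w').choose) • a := by
      rw [add_smul, (key w).choose_spec, (key w').choose_spec, (key (w + w')).choose_spec]
      rfl
    show (key (w + w')).choose • b = (key w).choose • b + (key w').choose • b
    rw [wd _ _ h1, add_smul]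
  · intro z w hw
    exact wd _ _ (by rw [(key w).choose_spec, hw])
end Cyclic


section Assemble

/-- The rationals mod one. -/
abbrev QZ : Type := ℚ ⧸ AddSubgroup.zmultiples (1 : ℚ)

noncomputable instance : DivisibleBy QZ ℤ :=
  QuotientAddGroup.mk_surjective.divisibleBy _ (fun _ _ => rfl)

lemma qz_zsmul_eq_zero_iff {p : ℕ} (hp : p.Prime) (N : ℕ) (z : ℤ) :
    z • (QuotientAddGroup.mk (((p:ℚ)^N)⁻¹) : QZ) = 0 ↔ (p:ℤ)^N ∣ z := by
  have hpN : ((p:ℚ))^N ≠ 0 := pow_ne_zero _ (by exact_mod_cast hp.ne_zero)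
  rw [show z • (QuotientAddGroup.mk (((p:ℚ)^N)⁻¹) : QZ)
      = QuotientAddGroup.mk (z • ((p:ℚ)^N)⁻¹) from rfl]
  rw [QuotientAddGroup.eq_zero_iff]
  constructor
  · rintro ⟨w, hw⟩
    refine ⟨w, ?_⟩
    have h1 : (w:ℚ) = z * ((p:ℚ)^N)⁻¹ := by
      simpa [zsmul_eq_mul] using hw
    have h2 : (z:ℚ) = (p:ℚ)^N * w := by
      rw [h1]; field_simp
    exact_mod_cast h2
  · rintro ⟨d, rfl⟩
    refine ⟨d, ?_⟩
    simp only [zsmul_eq_mul]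
    push_cast
    field_simp

lemma qz_mem_zmultiples {p : ℕ} (hp : p.Prime) (N : ℕ) (q : QZ) (hq : p^N • q = 0) :
    q ∈ AddSubgroup.zmultiples (QuotientAddGroup.mk (((p:ℚ)^N)⁻¹) : QZ) := by
  have hpN : ((p:ℚ))^N ≠ 0 := pow_ne_zero _ (by exact_mod_cast hp.ne_zero)
  obtain ⟨r, rfl⟩ := QuotientAddGroup.mk_surjective q
  have hq' : (QuotientAddGroup.mk (p^N • r) : QZ) = 0 := hq
  rw [QuotientAddGroup.eq_zero_iff] at hq'
  obtain ⟨w, hw⟩ := hq'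
  have hr : r = (w:ℚ) * ((p:ℚ)^N)⁻¹ := by
    have h1 : (w:ℚ) = ((p^N : ℕ) : ℚ) * r := by
      simpa [zsmul_eq_mul, nsmul_eq_mul] using hw
    rw [h1]
    push_cast
    field_simp
  refine ⟨w, ?_⟩
  show w • (QuotientAddGroup.mk (((p:ℚ)^N)⁻¹) : QZ) = _
  rw [show w • (QuotientAddGroup.mk (((p:ℚ)^N)⁻¹) : QZ)
      = QuotientAddGroup.mk (w • ((p:ℚ)^N)⁻¹) from rfl]
  congr 1
  rw [hr, zsmul_eq_mul]

lemma assemble {G : Type*} [AddCommGroup G] {p : ℕ} (hp : p.Prime)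
    {t : ℕ} {a b : ℕ → G} {s e : ℕ → ℕ} {x y : G}
    (hxa : x = ∑ i ∈ Finset.range t, p ^ s i • a i)
    (hyb : y = ∑ i ∈ Finset.range t, p ^ s i • b i)
    (hbe : ∀ i, i < t → p ^ e i • b i = 0)
    (hiii : ∀ (c : ℕ → ℤ) (M : ℕ), Dv p M (∑ j ∈ Finset.range t, c j • a j) →
      ∀ i, i < t → (p:ℤ) ^ (min M (e i)) ∣ c i) :
    ∃ g : G →+ G, g x = y := by
  classical
  have main : ∀ i : ℕ, ∃ θ : G →+ G, i < t →
      ∀ j, j < t → θ (a j) = if j = i then b i else 0 := by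
    intro i
    by_cases hit : i < t
    swap
    · exact ⟨0, fun h => absurd h hit⟩
    set N := e i with hN
    set HH : AddSubgroup G := {
      carrier := {z | ∃ (c : ℕ → ℤ) (g0 : G), z = (∑ j ∈ Finset.range t, c j • a j) + p ^ N • g0}
      zero_mem' := ⟨fun _ => 0, 0, by simp⟩
      add_mem' := by
        rintro z z' ⟨c, g0, rfl⟩ ⟨c', g0', rfl⟩
        refine ⟨c + c', g0 + g0', ?_⟩
        simp only [Pi.add_apply, add_smul, Finset.sum_add_distrib, smul_add]
        abel
      neg_mem' := by
        rintro z ⟨c, g0, rfl⟩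
        refine ⟨-c, -g0, ?_⟩
        simp only [Pi.neg_apply, neg_smul, Finset.sum_neg_distrib, smul_neg, neg_add]
    } with hHH
    set q0 : QZ := QuotientAddGroup.mk (((p:ℚ)^N)⁻¹) with hq0
    -- a canonical coefficient extraction
    have hmemrep : ∀ w : HH, ∃ (c : ℕ → ℤ) (g0 : G),
        (w : G) = (∑ j ∈ Finset.range t, c j • a j) + p ^ N • g0 := fun w => w.2
    have wd : ∀ (c c' : ℕ → ℤ) (g0 g0' : G),
        (∑ j ∈ Finset.range t, c j • a j) + p ^ N • g0
          = (∑ j ∈ Finset.range t, c' j • a j) + p ^ N • g0' →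
        c i • q0 = c' i • q0 := by
      intro c c' g0 g0' hrep
      have hdv : Dv p N (∑ j ∈ Finset.range t, (c j - c' j) • a j) := by
        refine ⟨g0' - g0, ?_⟩
        have : (∑ j ∈ Finset.range t, c j • a j) - (∑ j ∈ Finset.range t, c' j • a j)
            = p ^ N • g0' - p ^ N • g0 := by
          rw [sub_eq_sub_iff_add_eq_add, hrep]
          abel
        rw [smul_sub, ← this]
        rw [← Finset.sum_sub_distrib]
        congr 1
        funext j
        rw [sub_smul]
      have hdvd := hiii _ N hdv i hit
      rw [min_self] at hdvd
      have : (c i - c' i) • q0 = 0 := by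
        rw [hq0, qz_zsmul_eq_zero_iff hp]
        exact hdvd
      rw [sub_smul, sub_eq_zero] at this
      exact this
    set cf : HH → (ℕ → ℤ) := fun w => (hmemrep w).choose with hcf
    have cfspec : ∀ w : HH, ∃ g0 : G,
        (w : G) = (∑ j ∈ Finset.range t, cf w j • a j) + p ^ N • g0 :=
      fun w => (hmemrep w).choose_spec
    have wd' : ∀ (w : HH) (c : ℕ → ℤ) (g0 : G),
        (w : G) = (∑ j ∈ Finset.range t, c j • a j) + p ^ N • g0 →
        cf w i • q0 = c i • q0 := by
      intro w c g0 hw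
      obtain ⟨g1, hg1⟩ := cfspec w
      exact wd _ _ _ _ (by rw [← hg1, ← hw])
    set χ : HH →+ QZ := AddMonoidHom.mk' (fun w => cf w i • q0) (by
      intro w w'
      obtain ⟨g1, hg1⟩ := cfspec w
      obtain ⟨g2, hg2⟩ := cfspec w'
      show cf (w + w') i • q0 = cf w i • q0 + cf w' i • q0
      have hrep : ((w + w' : HH) : G)
          = (∑ j ∈ Finset.range t, (cf w j + cf w' j) • a j) + p ^ N • (g1 + g2) := by
        push_cast
        rw [hg1, hg2]
        simp only [add_smul, Finset.sum_add_distrib, smul_add]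
        abel
      rw [wd' _ _ _ hrep, add_smul]) with hχ
    obtain ⟨ψ, hψ⟩ := Module.Baer.extension_property_addMonoidHom
      (Module.Baer.of_divisible QZ) HH.subtype Subtype.val_injective χ
    have hψval : ∀ w : HH, ψ (w : G) = χ w := fun w => DFunLike.congr_fun hψ w
    have aval : ∀ j, j < t → ψ (a j) = (if i = j then (1:ℤ) else 0) • q0 := by
      intro j hjt
      have hmem : a j ∈ HH := by
        refine ⟨fun m => if m = j then 1 else 0, 0, ?_⟩
        rw [smul_zero, add_zero]
        rw [show (∑ m ∈ Finset.range t, (if m = j then (1:ℤ) else 0) • a m)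
            = ∑ m ∈ Finset.range t, (if m = j then a m else 0) by
          refine Finset.sum_congr rfl fun m _ => ?_
          by_cases h : m = j <;> simp [h]]
        rw [Finset.sum_ite_eq' (Finset.range t) j a]
        simp [hjt]
      have := hψval ⟨a j, hmem⟩
      rw [this]
      show cf ⟨a j, hmem⟩ i • q0 = _
      have := wd' ⟨a j, hmem⟩ (fun m => if m = j then 1 else 0) 0 (by
        rw [smul_zero, add_zero]
        rw [show (∑ m ∈ Finset.range t, (if m = j then (1:ℤ) else 0) • a m)
            = ∑ m ∈ Finset.range t, (if m = j then a m else 0) by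
          refine Finset.sum_congr rfl fun m _ => ?_
          by_cases h : m = j <;> simp [h]]
        rw [Finset.sum_ite_eq' (Finset.range t) j a]
        simp [hjt])
      rw [this]
    have kills : ∀ z : G, ψ (p ^ N • z) = 0 := by
      intro z
      have hmem : p ^ N • z ∈ HH := ⟨fun _ => 0, z, by simp⟩
      have h1 := hψval ⟨p ^ N • z, hmem⟩
      rw [h1]
      show cf ⟨p ^ N • z, hmem⟩ i • q0 = 0
      rw [wd' ⟨p ^ N • z, hmem⟩ (fun _ => 0) z (by simp), zero_smul]
    have tors : ∀ z : G, p ^ N • ψ z = 0 := by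
      intro z
      rw [← map_nsmul, kills]
    obtain ⟨ρ, hρ⟩ := exists_hom_zmultiples q0 (b i) (by
      intro z hz
      rw [hq0, qz_zsmul_eq_zero_iff hp] at hz
      obtain ⟨d, rfl⟩ := hz
      rw [mul_comm, mul_smul]
      have : ((p:ℤ)^N) • b i = 0 := by
        have h0 := hbe i hit
        rw [← hN] at h0
        calc ((p:ℤ)^N) • b i = ((p^N : ℕ) : ℤ) • b i := by norm_cast
        _ = p^N • b i := natCast_zsmul _ _
        _ = 0 := h0
      rw [this, smul_zero])
    set ψ' : G →+ AddSubgroup.zmultiples q0 :=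
      ψ.codRestrict _ (fun z => qz_mem_zmultiples hp N (ψ z) (tors z)) with hψ'
    refine ⟨ρ.comp ψ', fun _ j hjt => ?_⟩
    show ρ (ψ' (a j)) = _
    have hval : ((ψ' (a j) : QZ)) = (if i = j then (1:ℤ) else 0) • q0 := aval j hjt
    rw [hρ _ _ hval]
    by_cases h : i = j
    · simp [h]
    · simp [h, Ne.symm h]
  choose θ hθ using main
  refine ⟨∑ i ∈ Finset.range t, θ i, ?_⟩
  rw [AddMonoidHom.finset_sum_apply]
  rw [hyb]
  refine Finset.sum_congr rfl fun i hi => ?_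
  rw [Finset.mem_range] at hi
  conv_lhs => rw [hxa]
  rw [map_sum]
  rw [show (∑ j ∈ Finset.range t, θ i (p ^ s j • a j))
      = ∑ j ∈ Finset.range t, (if j = i then p ^ s j • b i else 0) by
    refine Finset.sum_congr rfl fun j hj => ?_
    rw [Finset.mem_range] at hj
    rw [map_nsmul, hθ i hi j hj]
    by_cases h : j = i <;> simp [h]]
  rw [Finset.sum_ite_eq' (Finset.range t) i (fun j => p ^ s j • b i)]
  simp [hi]

end Assemble


section Decomp
variable {G : Type*} [AddCommGroup G]

lemma pow_smul_add {p A B : ℕ} (z : G) : p ^ (A + B) • z = p ^ A • (p ^ B • z) := by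
  rw [pow_add, mul_smul]

lemma pow_smul_congr {p A B : ℕ} (hAB : A = B) (z : G) : p ^ A • z = p ^ B • z := by rw [hAB]

lemma zsmul_pow_comm {p γ : ℕ} (u : ℤ) (z : G) : ((p:ℤ)^γ * u) • z = u • (p ^ γ • z) := by
  rw [mul_comm, mul_smul]
  congr 1
  calc ((p:ℤ)^γ) • z = (((p^γ:ℕ)):ℤ) • z := by norm_cast
  _ = p^γ • z := natCast_zsmul _ _

lemma dv_succ {p j M : ℕ} {x : G} (h : Dv p M (p ^ j • x)) : Dv p (M + 1) (p ^ (j+1) • x) := by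
  obtain ⟨g, hg⟩ := h
  exact ⟨g, by rw [pow_succ, mul_comm, mul_smul, hg, ← mul_smul, mul_comm, ← pow_succ]⟩

/-- The position of the first gap (or `n` if none) in the height sequence `h` up to `n`. -/
def firstGap (h : ℕ → ℕ) (n : ℕ) : ℕ :=
  Nat.find (p := fun k => k = n ∨ (0 < k ∧ k < n ∧ h (k-1) + 1 < h k)) ⟨n, Or.inl rfl⟩

lemma firstGap_le (h : ℕ → ℕ) (n : ℕ) : firstGap h n ≤ n :=
  Nat.find_le (Or.inl rfl)

lemma firstGap_spec (h : ℕ → ℕ) (n : ℕ) :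
    firstGap h n = n ∨
      (0 < firstGap h n ∧ firstGap h n < n ∧ h (firstGap h n - 1) + 1 < h (firstGap h n)) :=
  Nat.find_spec (p := fun k => k = n ∨ (0 < k ∧ k < n ∧ h (k-1) + 1 < h k)) ⟨n, Or.inl rfl⟩

lemma firstGap_min {h : ℕ → ℕ} {n j : ℕ} (hj : j < firstGap h n) :
    ¬ (j = n ∨ (0 < j ∧ j < n ∧ h (j-1) + 1 < h j)) :=
  Nat.find_min (p := fun k => k = n ∨ (0 < k ∧ k < n ∧ h (k-1) + 1 < h k)) ⟨n, Or.inl rfl⟩ hj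

lemma gapless_below {p n : ℕ} {h : ℕ → ℕ} {x : G}
    (hdx : ∀ j, j < n → Dv p (h j) (p ^ j • x))
    (hndx : ∀ j, j < n → ¬ Dv p (h j + 1) (p ^ j • x)) :
    ∀ j, j < firstGap h n → h j = h 0 + j := by
  have hfle := firstGap_le h n
  intro j
  induction j with
  | zero => intro _; simp
  | succ j ihj =>
    intro hj
    have hj' : j < firstGap h n := by omega
    have hjn : j + 1 < n ∨ j + 1 = n := by omega
    have hihj := ihj hj'
    have hnoQ := firstGap_min hj
    push_neg at hnoQ
    obtain ⟨hne, hQ⟩ := hnoQ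
    rcases hjn with hjn | hjn
    swap
    · exact absurd hjn hne
    have hle : h (j+1) ≤ h j + 1 := by
      have := hQ (by omega) hjn
      simpa using this
    have hge : h j + 1 ≤ h (j+1) := by
      by_contra hlt
      push_neg at hlt
      have hd1 : Dv p (h j + 1) (p ^ (j+1) • x) := dv_succ (hdx j (by omega))
      exact hndx (j+1) hjn (hd1.mono (by omega))
    omega

/-- (vii): the constructed generator has exact heights. -/
lemma vii_lemma {p : ℕ} {x1 a1 : G} {h0 k1 : ℕ} (hk1 : 0 < k1)
    (ha1 : p ^ h0 • a1 = x1)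
    (hx1 : ∀ t, t < k1 → ¬ Dv p (h0 + t + 1) (p ^ t • x1)) :
    ∀ γ, γ < h0 + k1 → ¬ Dv p (γ + 1) (p ^ γ • a1) := by
  intro γ hγ hdv
  by_cases hγ0 : h0 ≤ γ
  · refine hx1 (γ - h0) (by omega) ?_
    have : p ^ (γ - h0) • x1 = p ^ γ • a1 := by
      rw [← ha1, ← pow_smul_add, (show γ - h0 + h0 = γ from by omega)]
    rw [this]
    have : h0 + (γ - h0) + 1 = γ + 1 := by omega
    rw [this]
    exact hdv
  · push_neg at hγ0
    refine hx1 0 hk1 ?_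
    have h2 := hdv.pow_nsmul (m := h0 - γ)
    rw [← pow_smul_add] at h2
    have e1 : h0 - γ + γ = h0 := by omega
    rw [e1, ha1] at h2
    have h3 : Dv p (h0 + 0 + 1) x1 := h2.mono (by omega)
    rw [pow_zero, one_smul]
    exact h3

/-- key divisibility propagation when extending a family by a new generator below. -/
lemma extend_dvd {p : ℕ} (hp : p.Prime) (hG : IsPGrp p G)
    {a1 : G} {e1 : ℕ}
    (hvii : ∀ γ, γ < e1 → ¬ Dv p (γ + 1) (p ^ γ • a1))
    (ha1e : p ^ e1 • a1 = 0)
    {t' : ℕ} {a' : ℕ → G} {e' : ℕ → ℕ}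
    (hlow : ∀ i, i < t' → e1 + 1 ≤ e' i)
    (hiii' : ∀ (c : ℕ → ℤ) (M : ℕ), Dv p M (∑ j ∈ Finset.range t', c j • a' j) →
      ∀ i, i < t' → (p:ℤ) ^ (min M (e' i)) ∣ c i)
    (c : ℕ → ℤ) (M : ℕ)
    (hdv : Dv p M (c 0 • a1 + ∑ j ∈ Finset.range t', c (j+1) • a' j)) :
    ((p:ℤ) ^ (min M e1) ∣ c 0) ∧ ∀ i, i < t' → (p:ℤ) ^ (min M (e' i)) ∣ c (i+1) := by
  have hpz : ((p:ℤ)) ≠ 0 := by exact_mod_cast hp.ne_zero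
  have hc0 : (p:ℤ) ^ (min M e1) ∣ c 0 := by
    by_cases hc : c 0 = 0
    · simp [hc]
    obtain ⟨γ, u, hcu, hu⟩ := int_val_decomp hp hc
    by_cases hγ : min M e1 ≤ γ
    · rw [hcu]; exact (pow_dvd_pow _ hγ).mul_right u
    push_neg at hγ
    exfalso
    have hγM : γ + 1 ≤ M := by omega
    have hγe : γ < e1 := by omega
    have h1 : Dv p (e1 + 1) (∑ j ∈ Finset.range t',
        ((p:ℤ)^(e1-γ) * c (j+1)) • a' j) := by
      have h2 := hdv.pow_nsmul (m := e1 - γ)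
      have h3 : p^(e1-γ) • (c 0 • a1 + ∑ j ∈ Finset.range t', c (j+1) • a' j)
          = ∑ j ∈ Finset.range t', ((p:ℤ)^(e1-γ) * c (j+1)) • a' j := by
        rw [smul_add, Finset.smul_sum]
        have hz : p^(e1-γ) • (c 0 • a1) = 0 := by
          rw [hcu, zsmul_pow_comm, smul_comm, ← pow_smul_add,
            (show e1 - γ + γ = e1 by omega), ha1e, smul_zero]
        rw [hz, zero_add]
        refine Finset.sum_congr rfl fun j _ => ?_
        rw [nsmul_zsmul]
      rw [h3] at h2
      exact h2.mono (by omega)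
    have h5 : ∀ i, i < t' → (p:ℤ)^(γ+1) ∣ c (i+1) := by
      intro i hi
      have h4 := hiii' _ (e1+1) h1 i hi
      rw [min_eq_left (by have := hlow i hi; omega)] at h4
      have hsplit : ((p:ℤ))^(e1+1) = (p:ℤ)^(e1-γ) * (p:ℤ)^(γ+1) := by
        rw [← pow_add]; congr 1; omega
      rw [hsplit] at h4
      obtain ⟨d, hd⟩ := h4
      exact ⟨d, mul_left_cancel₀ (pow_ne_zero (e1-γ) hpz) (by rw [hd, mul_assoc])⟩
    have h6 : Dv p (γ+1) (∑ j ∈ Finset.range t', c (j+1) • a' j) :=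
      Dv.sum _ _ (fun j hj => dv_zsmul_of_dvd (h5 j (Finset.mem_range.mp hj)) _)
    have h7 : Dv p (γ+1) (c 0 • a1) := by
      have h8 := (hdv.mono (show γ+1 ≤ M by omega)).sub h6
      simpa using h8
    rw [hcu, zsmul_pow_comm] at h7
    exact hvii γ hγe (dv_of_unit_zsmul hp hG hu h7)
  refine ⟨hc0, ?_⟩
  intro i hi
  have hz : Dv p M (c 0 • a1) := by
    by_cases hM : M ≤ e1
    · rw [min_eq_left hM] at hc0
      exact dv_zsmul_of_dvd hc0 a1
    · push_neg at hM
      rw [min_eq_right (by omega)] at hc0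
      obtain ⟨d, hd⟩ := hc0
      have hzero : c 0 • a1 = 0 := by
        rw [hd, mul_comm, mul_smul]
        have e3 : ((p:ℤ)^e1) • a1 = 0 := by
          calc ((p:ℤ)^e1) • a1 = (((p^e1:ℕ)):ℤ) • a1 := by norm_cast
          _ = p^e1 • a1 := natCast_zsmul _ _
          _ = 0 := ha1e
        rw [e3, smul_zero]
      rw [hzero]; exact dv_zero M
  have hsub : Dv p M (∑ j ∈ Finset.range t', c (j+1) • a' j) := by
    have h9 := hdv.sub hz
    simpa using h9
  exact hiii' _ M hsub i hi

end Decomp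


section DecompMain
variable {G : Type*} [AddCommGroup G]

/-- The target statement of the decomposition lemma. -/
def DecompConcl (p : ℕ) (n : ℕ) (h : ℕ → ℕ) (x y : G) : Prop :=
  ∃ (t : ℕ) (a b : ℕ → G) (s e : ℕ → ℕ),
    x = ∑ i ∈ Finset.range t, p ^ s i • a i ∧
    y = ∑ i ∈ Finset.range t, p ^ s i • b i ∧
    (∀ i, i < t → p ^ e i • a i = 0) ∧
    (∀ i, i < t → p ^ e i • b i = 0) ∧
    (∀ i j, i < j → j < t → e i < e j) ∧
    (∀ i, i < t → h 0 + firstGap h n ≤ e i) ∧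
    (∀ (c : ℕ → ℤ) (M : ℕ), Dv p M (∑ j ∈ Finset.range t, c j • a j) →
      ∀ i, i < t → (p:ℤ) ^ (min M (e i)) ∣ c i)

lemma decomp_base {p : ℕ} (hp : p.Prime) (hG : IsPGrp p G) {n : ℕ} {h : ℕ → ℕ} {x y : G}
    (hk : firstGap h n = n)
    (hxn : p ^ n • x = 0) (hyn : p ^ n • y = 0)
    (hdx : ∀ j, j < n → Dv p (h j) (p ^ j • x))
    (hndx : ∀ j, j < n → ¬ Dv p (h j + 1) (p ^ j • x))
    (hdy : ∀ j, j < n → Dv p (h j) (p ^ j • y)) :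
    DecompConcl p n h x y := by
  rcases Nat.eq_zero_or_pos n with hn0 | hnpos
  · subst hn0
    rw [pow_zero, one_smul] at hxn hyn
    exact ⟨0, 0, 0, 0, 0, by simp [hxn], by simp [hyn],
      by omega, by omega, by omega, by omega, fun c M _ i hi => by omega⟩
  · have gapless : ∀ j, j < n → h j = h 0 + j := by
      intro j hj
      exact gapless_below hdx hndx j (by omega)
    obtain ⟨a0, ha0⟩ : Dv p (h 0) x := by
      have := hdx 0 hnpos; rwa [pow_zero, one_smul] at this
    obtain ⟨b0, hb0⟩ : Dv p (h 0) y := by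
      have := hdy 0 hnpos; rwa [pow_zero, one_smul] at this
    have hx1 : ∀ t0, t0 < n → ¬ Dv p (h 0 + t0 + 1) (p ^ t0 • x) := by
      intro t0 ht0
      have := hndx t0 ht0
      rwa [gapless t0 ht0] at this
    have hvii := vii_lemma hnpos ha0 hx1
    have hae : p ^ (h 0 + n) • a0 = 0 := by
      rw [(show h 0 + n = n + h 0 from by omega), pow_smul_add, ha0, hxn]
    have hbe : p ^ (h 0 + n) • b0 = 0 := by
      rw [(show h 0 + n = n + h 0 from by omega), pow_smul_add, hb0, hyn]
    refine ⟨1, fun _ => a0, fun _ => b0, fun _ => h 0, fun _ => h 0 + n,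
      by rw [Finset.sum_range_one, ha0], by rw [Finset.sum_range_one, hb0],
      fun i _ => hae, fun i _ => hbe, by omega, fun i _ => by rw [hk], ?_⟩
    intro c M hdv i hi
    have hi0 : i = 0 := by omega
    subst hi0
    rw [Finset.sum_range_one] at hdv
    have hdv' : Dv p M (c 0 • a0 + ∑ j ∈ Finset.range 0, c (j+1) • a0) := by
      simpa using hdv
    exact (extend_dvd hp hG hvii hae (t' := 0) (a' := fun _ => a0) (e' := fun _ => 0)
      (by omega) (fun c M _ i hi => by omega) c M hdv').1

lemma decomp {p : ℕ} (hp : p.Prime) (hG : IsPGrp p G) :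
    ∀ (fuel : ℕ) (n : ℕ) (h : ℕ → ℕ) (x y : G),
    n - firstGap h n ≤ fuel →
    p ^ n • x = 0 → p ^ n • y = 0 →
    (∀ j, j < n → Dv p (h j) (p ^ j • x)) →
    (∀ j, j < n → ¬ Dv p (h j + 1) (p ^ j • x)) →
    (∀ j, j < n → Dv p (h j) (p ^ j • y)) →
    DecompConcl p n h x y := by
  intro fuel
  induction fuel with
  | zero =>
    intro n h x y hfuel hxn hyn hdx hndx hdy
    have hkn : firstGap h n = n := by
      have := firstGap_le h n
      omega
    exact decomp_base hp hG hkn hxn hyn hdx hndx hdy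
  | succ fuel ih =>
    intro n h x y hfuel hxn hyn hdx hndx hdy
    by_cases hkn : firstGap h n = n
    · exact decomp_base hp hG hkn hxn hyn hdx hndx hdy
    set k := firstGap h n with hkdef
    have hkn' : k ≤ n := firstGap_le h n
    rcases firstGap_spec h n with h' | ⟨hkpos, hklt, hgap⟩
    · exact absurd h' hkn
    rw [← hkdef] at hkpos hklt hgap
    have hnpos : 0 < n := by omega
    have gapless : ∀ j, j < k → h j = h 0 + j := fun j hj => gapless_below hdx hndx j hj
    have hhk : h 0 + k + 1 ≤ h k := by
      have h1 := gapless (k-1) (by omega)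
      omega
    obtain ⟨w, hw⟩ := hdx k hklt
    obtain ⟨v, hv⟩ := hdy k hklt
    set Nw := h k + (n - k) with hNw
    set hwf : ℕ → ℕ := fun j => if j < h k then j else h (k + (j - h k)) with hhwf
    have hwf0 : hwf 0 = 0 := by
      rw [hhwf]; simp only; rw [if_pos (by omega)]
    -- first gap of w is beyond h k
    have hfgw : h k + 1 ≤ firstGap hwf Nw := by
      rcases firstGap_spec hwf Nw with heq | ⟨hpos, hlt, hgap'⟩
      · omega
      by_contra hcon
      push_neg at hcon
      set kw := firstGap hwf Nw with hkw
      have h1 : hwf (kw - 1) = kw - 1 := by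
        rw [hhwf]; simp only; rw [if_pos (by omega)]
      by_cases h2 : kw < h k
      · have h3 : hwf kw = kw := by
          rw [hhwf]; simp only; rw [if_pos h2]
        omega
      · have hkweq : kw = h k := by omega
        have h3 : hwf kw = h k := by
          rw [hhwf]; simp only; rw [if_neg (by omega)]
          rw [hkweq]; simp
        omega
    -- recursion hypotheses
    have hxnw : p ^ Nw • w = 0 := by
      rw [hNw, (show h k + (n - k) = (n-k) + h k from by omega), pow_smul_add, hw,
        ← pow_smul_add, (show n - k + k = n from by omega), hxn]
    have hynv : p ^ Nw • v = 0 := by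
      rw [hNw, (show h k + (n - k) = (n-k) + h k from by omega), pow_smul_add, hv,
        ← pow_smul_add, (show n - k + k = n from by omega), hyn]
    have hdxw : ∀ j, j < Nw → Dv p (hwf j) (p ^ j • w) := by
      intro j hj
      by_cases h2 : j < h k
      · rw [hhwf]; simp only; rw [if_pos h2]
        exact dv_pow_smul (le_refl j) w
      · push_neg at h2
        rw [hhwf]; simp only; rw [if_neg (by omega)]
        have h3 : p ^ j • w = p ^ (k + (j - h k)) • x := by
          rw [(show j = (j - h k) + h k from by omega), pow_smul_add, hw, ← pow_smul_add]
          exact pow_smul_congr (by omega) x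
        rw [h3]
        exact hdx (k + (j - h k)) (by omega)
    have hndxw : ∀ j, j < Nw → ¬ Dv p (hwf j + 1) (p ^ j • w) := by
      intro j hj
      by_cases h2 : j < h k
      · rw [hhwf]; simp only; rw [if_pos h2]
        rintro ⟨g, hg⟩
        refine hndx k hklt ?_
        refine ⟨g, ?_⟩
        calc p ^ (h k + 1) • g = p ^ ((h k - j) + (j+1)) • g := pow_smul_congr (by omega) g
        _ = p ^ (h k - j) • (p ^ (j+1) • g) := pow_smul_add g
        _ = p ^ (h k - j) • (p ^ j • w) := by rw [hg]
        _ = p ^ ((h k - j) + j) • w := (pow_smul_add w).symm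
        _ = p ^ (h k) • w := pow_smul_congr (by omega) w
        _ = p ^ k • x := hw
      · push_neg at h2
        rw [hhwf]; simp only; rw [if_neg (by omega)]
        have h3 : p ^ j • w = p ^ (k + (j - h k)) • x := by
          rw [(show j = (j - h k) + h k from by omega), pow_smul_add, hw, ← pow_smul_add]
          exact pow_smul_congr (by omega) x
        rw [h3]
        exact hndx (k + (j - h k)) (by omega)
    have hdyv : ∀ j, j < Nw → Dv p (hwf j) (p ^ j • v) := by
      intro j hj
      by_cases h2 : j < h k
      · rw [hhwf]; simp only; rw [if_pos h2]
        exact dv_pow_smul (le_refl j) v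
      · push_neg at h2
        rw [hhwf]; simp only; rw [if_neg (by omega)]
        have h3 : p ^ j • v = p ^ (k + (j - h k)) • y := by
          rw [(show j = (j - h k) + h k from by omega), pow_smul_add, hv, ← pow_smul_add]
          exact pow_smul_congr (by omega) y
        rw [h3]
        exact hdy (k + (j - h k)) (by omega)
    obtain ⟨t', a', b', s', e', hxw', hyv', hae', hbe', hmono', hviii', hiii''⟩ :=
      ih Nw hwf w v (by omega) hxnw hynv hdxw hndxw hdyv
    have helow : ∀ i, i < t' → h k + 1 ≤ e' i := by
      intro i hi
      have := hviii' i hi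
      rw [hwf0] at this
      omega
    -- construct the new generator
    have hdx1 : Dv p (h 0) (x - p ^ (h k - k) • w) := by
      refine Dv.sub ?_ (dv_pow_smul (by omega) w)
      have := hdx 0 hnpos; rwa [pow_zero, one_smul] at this
    have hdy1 : Dv p (h 0) (y - p ^ (h k - k) • v) := by
      refine Dv.sub ?_ (dv_pow_smul (by omega) v)
      have := hdy 0 hnpos; rwa [pow_zero, one_smul] at this
    obtain ⟨a1, ha1⟩ := hdx1
    obtain ⟨b1, hb1⟩ := hdy1
    have hpkx1 : p ^ k • (x - p ^ (h k - k) • w) = 0 := by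
      rw [smul_sub, ← pow_smul_add, (show k + (h k - k) = h k from by omega), hw, sub_self]
    have hpky1 : p ^ k • (y - p ^ (h k - k) • v) = 0 := by
      rw [smul_sub, ← pow_smul_add, (show k + (h k - k) = h k from by omega), hv, sub_self]
    have ha1e : p ^ (h 0 + k) • a1 = 0 := by
      rw [(show h 0 + k = k + h 0 from by omega), pow_smul_add, ha1, hpkx1]
    have hb1e : p ^ (h 0 + k) • b1 = 0 := by
      rw [(show h 0 + k = k + h 0 from by omega), pow_smul_add, hb1, hpky1]
    have hx1exact : ∀ t0, t0 < k → ¬ Dv p (h 0 + t0 + 1) (p ^ t0 • (x - p ^ (h k - k) • w)) := by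
      intro t0 ht0 hdvc
      have hd2 : Dv p (h 0 + t0 + 1) (p ^ t0 • (p ^ (h k - k) • w)) := by
        rw [← pow_smul_add]
        exact dv_pow_smul (by omega) w
      have hd3 : Dv p (h 0 + t0 + 1) (p ^ t0 • x) := by
        have := hdvc.add hd2
        rwa [← smul_add, sub_add_cancel] at this
      refine hndx t0 (by omega) ?_
      rwa [gapless t0 ht0]
    have hvii1 := vii_lemma hkpos ha1 hx1exact
    -- assemble the new family
    refine ⟨t' + 1,
      (fun i => match i with | 0 => a1 | Nat.succ j => a' j),
      (fun i => match i with | 0 => b1 | Nat.succ j => b' j),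
      (fun i => match i with | 0 => h 0 | Nat.succ j => (h k - k) + s' j),
      (fun i => match i with | 0 => h 0 + k | Nat.succ j => e' j),
      ?_, ?_, ?_, ?_, ?_, ?_, ?_⟩
    · rw [Finset.sum_range_succ']
      rw [show (∑ j ∈ Finset.range t', (p:ℕ) ^ ((h k - k) + s' j) • a' j)
          = ∑ j ∈ Finset.range t', p ^ (h k - k) • (p ^ s' j • a' j) from
        Finset.sum_congr rfl fun j _ => pow_smul_add (a' j)]
      rw [← Finset.smul_sum, ← hxw']
      show x = p ^ (h k - k) • w + p ^ (h 0) • a1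
      rw [ha1]
      abel
    · rw [Finset.sum_range_succ']
      rw [show (∑ j ∈ Finset.range t', (p:ℕ) ^ ((h k - k) + s' j) • b' j)
          = ∑ j ∈ Finset.range t', p ^ (h k - k) • (p ^ s' j • b' j) from
        Finset.sum_congr rfl fun j _ => pow_smul_add (b' j)]
      rw [← Finset.smul_sum, ← hyv']
      show y = p ^ (h k - k) • v + p ^ (h 0) • b1
      rw [hb1]
      abel
    · rintro (_|j) hi
      · exact ha1e
      · exact hae' j (by omega)
    · rintro (_|j) hi
      · exact hb1e
      · exact hbe' j (by omega)
    · rintro (_|i) (_|j) hij hj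
      · omega
      · show h 0 + k < e' j
        have := helow j (by omega)
        omega
      · omega
      · exact hmono' i j (by omega) (by omega)
    · rintro (_|i) hi
      · rw [← hkdef]
      · rw [← hkdef]
        show h 0 + k ≤ e' i
        have := helow i (by omega)
        omega
    · intro c M hdv i hi
      have hdv' : Dv p M (c 0 • a1 + ∑ j ∈ Finset.range t', c (j+1) • a' j) := by
        rw [Finset.sum_range_succ'] at hdv
        have hdv2 : Dv p M ((∑ j ∈ Finset.range t', c (j+1) • a' j) + c 0 • a1) := hdv
        rwa [add_comm] at hdv2
      have helow2 : ∀ i, i < t' → (h 0 + k) + 1 ≤ e' i := fun i hi => by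
        have := helow i hi; omega
      have hres := extend_dvd hp hG hvii1 ha1e helow2 hiii'' c M hdv'
      match i, hi with
      | 0, _ => exact hres.1
      | Nat.succ j, hi => exact hres.2 j (by omega)
end DecompMain


theorem stmt4 {G : Type*} [AddCommGroup G] (p : ℕ) (hp : p.Prime) (hG : IsPGrp p G)
    (x : G) (n : ℕ) (hx : addOrderOf x = p ^ n)
    (hU : ∀ z ∈ zmultiples x, (∀ m : ℕ, ∃ y : G, p ^ m • y = z) → z = 0) :
    InQ (zmultiples x) ↔
      ∀ (y : G) (m : ℕ), addOrderOf y = p ^ m → m ≤ n →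
        ∀ k : ℕ, pHeight p (p ^ k • x) ≤ pHeight p (p ^ k • y) := by
  have hpnx : p ^ n • x = 0 := by
    rw [← hx]; exact addOrderOf_nsmul_eq_zero x
  constructor
  · -- InQ → Ulm condition
    intro hQ y m hym hmn k
    have hpny : p ^ n • y = 0 := by
      rw [(show n = (n - m) + m from by omega), pow_smul_add, ← hym,
        addOrderOf_nsmul_eq_zero y, smul_zero]
    obtain ⟨f, hf⟩ := exists_hom_zmultiples x y (by
      intro z hz
      have hdvd : ((p:ℤ))^n ∣ z := by
        have h1 : ((addOrderOf x : ℤ)) ∣ z := addOrderOf_dvd_iff_zsmul_eq_zero.mpr hz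
        rw [hx] at h1
        exact_mod_cast h1
      obtain ⟨d, rfl⟩ := hdvd
      rw [mul_comm, mul_smul]
      have : ((p:ℤ)^n) • y = 0 := by
        calc ((p:ℤ)^n) • y = (((p^n : ℕ)):ℤ) • y := by norm_cast
        _ = p^n • y := natCast_zsmul _ _
        _ = 0 := hpny
      rw [this, smul_zero])
    obtain ⟨g, hg⟩ := hQ f
    have hgx : g x = y := by
      have hmem : x ∈ zmultiples x := mem_zmultiples x
      have h1 := hg ⟨x, hmem⟩
      have h2 := hf 1 ⟨x, hmem⟩ (by simp)
      rw [h1, h2, one_smul]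
    have h3 : g (p ^ k • x) = p ^ k • y := by rw [map_nsmul, hgx]
    calc pHeight p (p ^ k • x) ≤ pHeight p (g (p ^ k • x)) := pHeight_le_map g _
    _ = pHeight p (p ^ k • y) := by rw [h3]
  · -- Ulm condition → InQ
    intro hUlm f
    set y := f ⟨x, mem_zmultiples x⟩ with hy
    have hpny : p ^ n • y = 0 := by
      have h1 : (p ^ n • (⟨x, mem_zmultiples x⟩ : zmultiples x)) = 0 := by
        ext
        show p ^ n • x = 0
        exact hpnx
      calc p ^ n • y = f (p ^ n • ⟨x, mem_zmultiples x⟩) := by rw [map_nsmul]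
      _ = f 0 := by rw [h1]
      _ = 0 := map_zero f
    -- order of y
    obtain ⟨m, hmn, hym⟩ : ∃ m, m ≤ n ∧ addOrderOf y = p ^ m := by
      have h1 : addOrderOf y ∣ p ^ n := addOrderOf_dvd_iff_nsmul_eq_zero.mpr hpny
      obtain ⟨m, hmn, hm⟩ := (Nat.dvd_prime_pow hp).mp h1
      exact ⟨m, hmn, hm⟩
    have hk := hUlm y m hym hmn
    -- exact heights of x
    have hpow1 : 1 < p := hp.one_lt
    have hxj : ∀ j, j < n → p ^ j • x ≠ 0 := by
      intro j hj h0
      have h1 : addOrderOf x ∣ p ^ j := addOrderOf_dvd_iff_nsmul_eq_zero.mpr h0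
      rw [hx] at h1
      have h2 : n ≤ j := (Nat.pow_dvd_pow_iff_le_right hpow1).mp h1
      omega
    have hex : ∀ j, j < n → ∃ M, ¬ Dv p M (p ^ j • x) := by
      intro j hj
      by_contra hcon
      push_neg at hcon
      refine hxj j hj (hU (p ^ j • x) ?_ ?_)
      · exact ⟨((p^j : ℕ) : ℤ), natCast_zsmul x (p^j)⟩
      · intro M
        exact hcon M
    classical
    set h : ℕ → ℕ := fun j => if hj : j < n then Nat.find (hex j hj) - 1 else 0 with hh
    have hfindpos : ∀ j (hj : j < n), 1 ≤ Nat.find (hex j hj) := by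
      intro j hj
      rcases Nat.eq_zero_or_pos (Nat.find (hex j hj)) with h0 | h1
      · exfalso
        have := Nat.find_spec (hex j hj)
        rw [h0] at this
        exact this (dv_zero' _)
      · exact h1
    have hdx : ∀ j, j < n → Dv p (h j) (p ^ j • x) := by
      intro j hj
      rw [hh]
      simp only [dif_pos hj]
      by_contra hcon
      have h2 := Nat.find_min (hex j hj) (m := Nat.find (hex j hj) - 1)
        (by have := hfindpos j hj; omega)
      exact h2 hcon
    have hndx : ∀ j, j < n → ¬ Dv p (h j + 1) (p ^ j • x) := by
      intro j hj
      rw [hh]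
      simp only [dif_pos hj]
      have h1 : Nat.find (hex j hj) - 1 + 1 = Nat.find (hex j hj) := by
        have := hfindpos j hj; omega
      rw [h1]
      exact Nat.find_spec (hex j hj)
    have hdy : ∀ j, j < n → Dv p (h j) (p ^ j • y) := by
      intro j hj
      refine dv_of_le_pHeight (le_trans (le_pHeight_of_dv (hdx j hj)) (hk j))
    obtain ⟨t, a, b, s, e, hxa, hyb, hae, hbe, hmono, hviii, hiii⟩ :=
      decomp hp hG n n h x y (by omega) hpnx hpny hdx hndx hdy
    obtain ⟨g, hgx⟩ := assemble hp hxa hyb hbe hiii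
    refine ⟨g, ?_⟩
    rintro ⟨z, hz⟩
    obtain ⟨c, hc⟩ := mem_zmultiples_iff.mp hz
    have h1 : (⟨z, hz⟩ : zmultiples x) = c • ⟨x, mem_zmultiples x⟩ := by
      ext
      show z = c • x
      rw [hc]
    show g z = f ⟨z, hz⟩
    have h2 : f ⟨z, hz⟩ = c • y := by rw [h1, map_zsmul, ← hy]
    have h3 : g z = c • y := by rw [← hc, map_zsmul, hgx]
    rw [h3, h2]
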